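/- Let U and T be unitary operators on a Hilbert space H satisfying U T U⁻¹ = T², and let ψ ∈ H. Define K((j,k),(j',k')) := ⟨U^j T^k ψ, U^{j'} T^{k'} ψ⟩. Then for all j, j' ≤ 0 and all k, k' ∈ ℤ, K((j,k),(j',k')) = K((j, 2^{-j}+k),(j', 2^{-j'}+k')). (Here 2^{-j} ∈ ℤ since j ≤ 0.) -/

import Mathlib

private lemma BS_aux {H : Type*} [NormedAddCommGroup H]
    [InnerProductSpace ℂ H] (U T : H ≃ₗᵢ[ℂ] H) (hUT : U * T * U⁻¹ = T ^ 2) :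
    ∀ m : ℕ, U ^ (-(m : ℤ)) * T ^ ((2 : ℤ) ^ m) = T * U ^ (-(m : ℤ)) := by
  have hsemi : SemiconjBy U T (T ^ 2) := by
    unfold SemiconjBy
    rw [← hUT]; group
  have hsemi' : ∀ n : ℤ, U⁻¹ * T ^ (2 * n) = T ^ n * U⁻¹ := by
    intro n
    have h := (hsemi.zpow_right n).eq
    rw [← zpow_natCast T 2, ← zpow_mul, mul_comm] at h
    -- h : U * T ^ n = T ^ (2 * n) * U
    have := congrArg (fun x => U⁻¹ * x * U⁻¹) h
    simpa [mul_assoc, mul_comm] using this.symm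
  intro m
  induction m with
  | zero => simp
  | succ m ih =>
    have h2 : ((2:ℤ) ^ (m+1)) = 2 * 2 ^ m := by ring
    have hn : (-((m:ℤ)+1)) = -(m:ℤ) + (-1) := by ring
    push_cast
    rw [hn, zpow_add, h2, zpow_neg_one, mul_assoc, hsemi' ((2:ℤ)^m), ← mul_assoc, ih,
      mul_assoc]

theorem BS_kernel_translation_invariant {H : Type*} [NormedAddCommGroup H]
    [InnerProductSpace ℂ H] (U T : H ≃ₗᵢ[ℂ] H) (hUT : U * T * U⁻¹ = T ^ 2) (ψ : H) :
    ∀ j j' k k' : ℤ, j ≤ 0 → j' ≤ 0 →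
      (inner ℂ ((U ^ j * T ^ k) ψ) ((U ^ j' * T ^ k') ψ) : ℂ)
        = (inner ℂ ((U ^ j * T ^ ((2 : ℤ) ^ (-j).toNat + k)) ψ)
            ((U ^ j' * T ^ ((2 : ℤ) ^ (-j').toNat + k')) ψ) : ℂ) := by
  have key : ∀ j k : ℤ, j ≤ 0 →
      U ^ j * T ^ ((2 : ℤ) ^ (-j).toNat + k) = T * (U ^ j * T ^ k) := by
    intro j k hj
    have hjj : j = -(((-j).toNat : ℤ)) := by omega
    have h := BS_aux U T hUT (-j).toNat
    rw [← hjj] at h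
    rw [zpow_add, ← mul_assoc, h, mul_assoc]
  intro j j' k k' hj hj'
  rw [key j k hj, key j' k' hj']
  have : ∀ x y : H, (inner ℂ (T x) (T y) : ℂ) = inner ℂ x y := fun x y =>
    T.inner_map_map x y
  simp only [LinearIsometryEquiv.coe_mul, Function.comp_apply]
  exact (this _ _).symm
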